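/- Let {X_n} satisfy AIM(x_n) with separation sequence q_n and mixing coefficients α_n. Let k ≥ 2 and let I_1, I_2, …, I_k be distinct subintervals of {1, 2, …, n} with |I_i| ≥ q_n for 1 ≤ i ≤ k, such that I_i and I_{i+1} are separated by q_n for 1 ≤ i ≤ k−1. Then |P(M(∪_{i=1}^k I_i) ≤ x_n) − ∏_{i=1}^k P(M(I_i) ≤ x_n)| ≤ (k−1)·α_n + 2(k−2)·q_n·F̄(x_n). -/
import Mathlib


open MeasureTheory Filter Finset Asymptotics

/-- Probability of an event as a real number. -/
noncomputable def pr {Ω : Type*} [MeasurableSpace Ω] (P : Measure Ω) (A : Set Ω) : ℝ :=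
  (P A).toReal

/-- The event that `X i ≤ x` for every index `i` in the set `S`;
this is the event `{M(S) ≤ x}` where `M(S) = max {X i : i ∈ S}`. -/
def allLe {Ω : Type*} (X : ℕ → Ω → ℝ) (S : Set ℕ) (x : ℝ) : Set Ω :=
  {ω | ∀ i ∈ S, X i ω ≤ x}

/-- `α` is a sequence of AIM mixing coefficients for `X` relative to thresholds `xs`
with separation sequence `q`: for any two intervals `I₁ = [a,b]`, `I₂ = [b+qₙ+1, c]`
contained in `{1,…,n}`, separated by `qₙ`, each of cardinality at least `qₙ`,
the maximum-based discrepancy is bounded by `α n`. -/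
def AIMBound {Ω : Type*} [MeasurableSpace Ω] (P : Measure Ω) (X : ℕ → Ω → ℝ)
    (xs : ℕ → ℝ) (q : ℕ → ℕ) (α : ℕ → ℝ) : Prop :=
  ∀ n a b c : ℕ, 1 ≤ a → a ≤ b → b + q n + 1 ≤ c → c ≤ n →
    q n ≤ b + 1 - a → q n ≤ c - (b + q n) →
    |pr P (allLe X (Set.Icc a b ∪ Set.Icc (b + q n + 1) c) (xs n)) -
      pr P (allLe X (Set.Icc a b) (xs n)) *
        pr P (allLe X (Set.Icc (b + q n + 1) c) (xs n))| ≤ α n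

section helpers
variable {Ω : Type*} [MeasurableSpace Ω] (P : Measure Ω) [IsProbabilityMeasure P]

lemma pr_nonneg (A : Set Ω) : 0 ≤ pr P A := ENNReal.toReal_nonneg

lemma pr_le_one (A : Set Ω) : pr P A ≤ 1 := by
  have h : P A ≤ 1 := prob_le_one
  have := ENNReal.toReal_mono (by simp) h
  simpa [pr] using this

lemma pr_mono {A B : Set Ω} (h : A ⊆ B) : pr P A ≤ pr P B :=
  ENNReal.toReal_mono (measure_ne_top P B) (measure_mono h)

lemma pr_fill (X : ℕ → Ω → ℝ) (F : ℝ → ℝ) (x : ℝ)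
    (hmeas : ∀ i, Measurable (X i))
    (hF : ∀ i, 1 ≤ i → pr P {ω | X i ω ≤ x} = F x)
    (S T : Set ℕ) (G : Finset ℕ) (hST : S ⊆ T) (hTG : T ⊆ S ∪ ↑G)
    (hG : ∀ i ∈ G, 1 ≤ i) :
    |pr P (allLe X S x) - pr P (allLe X T x)| ≤ (G.card : ℝ) * (1 - F x) := by
  have h0 : allLe X T x ⊆ allLe X S x := fun ω hω i hi => hω i (hST hi)
  have hsub : allLe X S x ⊆ allLe X T x ∪ ⋃ i ∈ G, {ω | ¬ X i ω ≤ x} := by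
    intro ω hω
    by_cases h : ω ∈ allLe X T x
    · exact Or.inl h
    · right
      simp only [allLe, Set.mem_setOf_eq, not_forall] at h
      obtain ⟨i, hi, hxi⟩ := h
      have hiG : i ∈ G := by
        rcases hTG hi with h' | h'
        · exact absurd (hω i h') hxi
        · exact h'
      exact Set.mem_biUnion hiG hxi
  have key : P (allLe X S x) ≤ P (allLe X T x) + ∑ i ∈ G, P {ω | ¬ X i ω ≤ x} := by
    refine (measure_mono hsub).trans ?_
    refine (measure_union_le _ _).trans ?_
    gcongr
    exact measure_biUnion_finset_le G _
  have hcompl : ∀ i ∈ G, (P {ω | ¬ X i ω ≤ x}).toReal = 1 - F x := by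
    intro i hi
    have hm : MeasurableSet {ω | X i ω ≤ x} := (hmeas i) measurableSet_Iic
    have he : {ω | ¬ X i ω ≤ x} = {ω | X i ω ≤ x}ᶜ := rfl
    rw [he, measure_compl hm (measure_ne_top _ _), measure_univ,
      ENNReal.toReal_sub_of_le prob_le_one (by simp)]
    simp [← hF i (hG i hi), pr]
  have hreal : pr P (allLe X S x) ≤ pr P (allLe X T x) + (G.card : ℝ) * (1 - F x) := by
    have hne : P (allLe X T x) + ∑ i ∈ G, P {ω | ¬ X i ω ≤ x} ≠ ⊤ := by
      refine ENNReal.add_ne_top.2 ⟨measure_ne_top _ _, ?_⟩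
      exact (ENNReal.sum_lt_top.2 fun i _ => measure_lt_top _ _).ne
    have := ENNReal.toReal_mono hne key
    rw [ENNReal.toReal_add (measure_ne_top _ _)
        ((ENNReal.sum_lt_top.2 fun i _ => measure_lt_top _ _).ne),
      ENNReal.toReal_sum (fun i _ => measure_ne_top _ _)] at this
    rw [Finset.sum_congr rfl hcompl, Finset.sum_const, nsmul_eq_mul] at this
    exact this
  have hle : pr P (allLe X T x) ≤ pr P (allLe X S x) := pr_mono P h0
  rw [abs_of_nonneg (by linarith)]
  linarith

end helpers

/-- Lemma 1 of the paper: if `{Xₙ}` satisfies AIM(xₙ) with separation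
sequence `qₙ` and mixing coefficients `αₙ`, and `I₁,…,I_k` (`k ≥ 2`) are distinct
subintervals of `{1,…,n}`, each of cardinality at least `qₙ`, with consecutive
intervals separated by `qₙ`, then
`|P(M(⋃ Iᵢ) ≤ xₙ) − ∏ P(M(Iᵢ) ≤ xₙ)| ≤ (k−1)αₙ + 2(k−2)qₙ·F̄(xₙ)`. -/
theorem stmt0 {Ω : Type*} [MeasurableSpace Ω] (P : Measure Ω) [IsProbabilityMeasure P]
    (X : ℕ → Ω → ℝ) (F : ℝ → ℝ) (xs : ℕ → ℝ) (q : ℕ → ℕ) (α : ℕ → ℝ)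
    (hmeas : ∀ i, Measurable (X i))
    (hF : ∀ i, 1 ≤ i → ∀ t : ℝ, pr P {ω | X i ω ≤ t} = F t)
    (hqpos : ∀ m, 1 ≤ q m)
    (hq : (fun n => (q n : ℝ)) =o[atTop] (fun n => (n : ℝ)))
    (hα : Tendsto α atTop (nhds 0))
    (hbd : AIMBound P X xs q α)
    (n k : ℕ) (hk : 2 ≤ k) (a b : ℕ → ℕ)
    (hab : ∀ i < k, a i ≤ b i)
    (ha1 : 1 ≤ a 0) (hbn : b (k - 1) ≤ n)
    (hcard : ∀ i < k, q n ≤ b i + 1 - a i)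
    (hsep : ∀ i, i + 1 < k → a (i + 1) = b i + q n + 1) :
    |pr P (allLe X (⋃ i ∈ Finset.range k, Set.Icc (a i) (b i)) (xs n)) -
      ∏ i ∈ Finset.range k, pr P (allLe X (Set.Icc (a i) (b i)) (xs n))| ≤
      ((k : ℝ) - 1) * α n + 2 * ((k : ℝ) - 2) * (q n : ℝ) * (1 - F (xs n)) := by
  set x := xs n with hx
  set Q := q n with hQ
  set A := α n with hA
  set Fb : ℝ := 1 - F (xs n) with hFb
  have hF' : ∀ i, 1 ≤ i → pr P {ω | X i ω ≤ x} = F x := fun i hi => hF i hi x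
  have hFbnn : 0 ≤ Fb := by
    have h1 := hF 1 le_rfl (xs n)
    have h2 := pr_le_one P {ω | X 1 ω ≤ xs n}
    rw [h1] at h2
    simpa [hFb] using h2
  -- basic monotonicity facts
  have hstep : ∀ i, i + 1 < k → b i + Q + 1 ≤ b (i + 1) := by
    intro i hi
    have h1 := hsep i hi
    have h2 := hab (i + 1) hi
    omega
  have bmono : ∀ j, j < k → ∀ i, i ≤ j → b i ≤ b j := by
    intro j
    induction j with
    | zero => intro _ i hi; obtain rfl := Nat.le_zero.mp hi; exact le_rfl
    | succ j ih =>
      intro hjk i hi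
      rcases Nat.eq_or_lt_of_le hi with rfl | h
      · exact le_rfl
      · have h1 := hstep j hjk
        have h2 := ih (by omega) i (by omega)
        omega
  have amono : ∀ i, i < k → a 0 ≤ a i := by
    intro i hi
    cases i with
    | zero => exact le_rfl
    | succ i =>
      have h1 := hsep i hi
      have h2 := hab 0 (by omega)
      have h3 := bmono i (by omega) 0 (by omega)
      omega
  -- the covering lemma: every point of [a 0, b j] is in some interval or some gap
  have cover : ∀ j, j < k → ∀ m, a 0 ≤ m → m ≤ b j →
      (∃ i, i ≤ j ∧ a i ≤ m ∧ m ≤ b i) ∨ (∃ i, i < j ∧ b i + 1 ≤ m ∧ m ≤ b i + Q) := by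
    intro j
    induction j with
    | zero => intro _ m h1 h2; exact Or.inl ⟨0, le_rfl, h1, h2⟩
    | succ j ih =>
      intro hjk m h1 h2
      by_cases hm : m ≤ b j
      · rcases ih (by omega) m h1 hm with ⟨i, hi1, hi2, hi3⟩ | ⟨i, hi1, hi2, hi3⟩
        · exact Or.inl ⟨i, by omega, hi2, hi3⟩
        · exact Or.inr ⟨i, by omega, hi2, hi3⟩
      · have hsp := hsep j hjk
        by_cases hm2 : a (j + 1) ≤ m
        · exact Or.inl ⟨j + 1, le_rfl, hm2, h2⟩
        · exact Or.inr ⟨j, by omega, by omega, by omega⟩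
  -- the key induction on filled intervals J_j = [a 0, b j]
  have H : ∀ j, j < k →
      |pr P (allLe X (Set.Icc (a 0) (b j)) x) -
        ∏ i ∈ Finset.range (j + 1), pr P (allLe X (Set.Icc (a i) (b i)) x)| ≤
      (j : ℝ) * A + (j : ℝ) * Q * Fb := by
    intro j
    induction j with
    | zero => intro _; simp
    | succ j ih =>
      intro hjk
      have IH := ih (by omega)
      have hsp := hsep j hjk
      have hb01 : a 0 ≤ b 0 := hab 0 (by omega)
      have haj : a 0 ≤ b j := le_trans hb01 (bmono j (by omega) 0 (by omega))
      have hbj1 : b j + Q + 1 ≤ b (j + 1) := hstep j hjk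
      -- AIM application
      have hb0j : b 0 ≤ b j := bmono j (by omega) 0 (by omega)
      have hAIM := hbd n (a 0) (b j) (b (j + 1)) ha1 haj hbj1
        (le_trans (bmono (k - 1) (by omega) (j + 1) (by omega)) hbn)
        (by have h1 := hcard 0 (by omega); have h2 := hab 0 (by omega); omega)
        (by have h1 := hcard (j + 1) hjk; have h2 := hab (j + 1) hjk; omega)
      rw [← hQ, ← hx] at hAIM
      -- gap fill
      set Sset : Set ℕ := Set.Icc (a 0) (b j) ∪ Set.Icc (b j + Q + 1) (b (j + 1)) with hSset
      have hsub1 : Sset ⊆ Set.Icc (a 0) (b (j + 1)) := by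
        intro m hm
        simp only [hSset, Set.mem_union, Set.mem_Icc] at hm ⊢
        omega
      have hsub2 : Set.Icc (a 0) (b (j + 1)) ⊆ Sset ∪ ↑(Finset.Icc (b j + 1) (b j + Q)) := by
        intro m hm
        simp only [hSset, Set.mem_union, Set.mem_Icc, Finset.coe_Icc] at hm ⊢
        omega
      have hfill := pr_fill P X F x hmeas hF' Sset (Set.Icc (a 0) (b (j + 1)))
        (Finset.Icc (b j + 1) (b j + Q)) hsub1 hsub2
        (by intro i hi; simp only [Finset.mem_Icc] at hi; omega)
      have hcardnat : (Finset.Icc (b j + 1) (b j + Q)).card = Q := by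
        rw [Nat.card_Icc]; omega
      have hcard' : ((Finset.Icc (b j + 1) (b j + Q)).card : ℝ) = (Q : ℝ) := by
        rw [hcardnat]
      rw [hcard'] at hfill
      -- product split
      rw [Finset.prod_range_succ]
      set p := pr P (allLe X (Set.Icc (a (j + 1)) (b (j + 1))) x) with hp
      set Pi := ∏ i ∈ Finset.range (j + 1), pr P (allLe X (Set.Icc (a i) (b i)) x) with hPi
      have hp0 : 0 ≤ p := pr_nonneg P _
      have hp1 : p ≤ 1 := pr_le_one P _
      have hsp' : Set.Icc (a (j + 1)) (b (j + 1)) = Set.Icc (b j + Q + 1) (b (j + 1)) := by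
        rw [hsp]
      have hAIM' : |pr P (allLe X Sset x) - pr P (allLe X (Set.Icc (a 0) (b j)) x) * p| ≤ A := by
        rw [hp, hsp']; exact hAIM
      have h3 : |pr P (allLe X (Set.Icc (a 0) (b j)) x) * p - Pi * p| ≤
          (j : ℝ) * A + (j : ℝ) * Q * Fb := by
        rw [← sub_mul, abs_mul, abs_of_nonneg hp0]
        calc |pr P (allLe X (Set.Icc (a 0) (b j)) x) - Pi| * p
            ≤ ((j : ℝ) * A + (j : ℝ) * Q * Fb) * p := by
              apply mul_le_mul_of_nonneg_right IH hp0
          _ ≤ ((j : ℝ) * A + (j : ℝ) * Q * Fb) * 1 := by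
              apply mul_le_mul_of_nonneg_left hp1
              exact le_trans (abs_nonneg _) IH
          _ = (j : ℝ) * A + (j : ℝ) * Q * Fb := mul_one _
      have tri : |pr P (allLe X (Set.Icc (a 0) (b (j + 1))) x) - Pi * p| ≤
          |pr P (allLe X (Set.Icc (a 0) (b (j + 1))) x) - pr P (allLe X Sset x)| +
          |pr P (allLe X Sset x) - pr P (allLe X (Set.Icc (a 0) (b j)) x) * p| +
          |pr P (allLe X (Set.Icc (a 0) (b j)) x) * p - Pi * p| := by
        have := abs_sub_le (pr P (allLe X (Set.Icc (a 0) (b (j + 1))) x))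
          (pr P (allLe X (Set.Icc (a 0) (b j)) x) * p) (Pi * p)
        have := abs_sub_le (pr P (allLe X (Set.Icc (a 0) (b (j + 1))) x))
          (pr P (allLe X Sset x)) (pr P (allLe X (Set.Icc (a 0) (b j)) x) * p)
        linarith [abs_sub_le (pr P (allLe X (Set.Icc (a 0) (b (j + 1))) x))
            (pr P (allLe X Sset x)) (Pi * p),
          abs_sub_le (pr P (allLe X Sset x))
            (pr P (allLe X (Set.Icc (a 0) (b j)) x) * p) (Pi * p)]
      have hfill' : |pr P (allLe X (Set.Icc (a 0) (b (j + 1))) x) - pr P (allLe X Sset x)| ≤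
          (Q : ℝ) * Fb := by rw [abs_sub_comm]; exact hfill
      have harith : ((j + 1 : ℕ) : ℝ) * A + ((j + 1 : ℕ) : ℝ) * Q * Fb =
          ((j : ℝ) * A + (j : ℝ) * Q * Fb) + (A + (Q : ℝ) * Fb) := by push_cast; ring
      calc |pr P (allLe X (Set.Icc (a 0) (b (j + 1))) x) - Pi * p| ≤ _ := tri
        _ ≤ (Q : ℝ) * Fb + A + ((j : ℝ) * A + (j : ℝ) * Q * Fb) := by
            linarith [hfill', hAIM', h3]
        _ = ((j + 1 : ℕ) : ℝ) * A + ((j + 1 : ℕ) : ℝ) * Q * Fb := by rw [harith]; ring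
  -- final assembly
  obtain ⟨K, rfl⟩ : ∃ K, k = K + 2 := ⟨k - 2, by omega⟩
  set U : Set ℕ := ⋃ i ∈ Finset.range (K + 2), Set.Icc (a i) (b i) with hU
  have hKk : K < K + 2 := by omega
  have hbK1 : b K + Q + 1 ≤ b (K + 1) := hstep K (by omega)
  have haK : a 0 ≤ b K := le_trans (hab 0 (by omega)) (bmono K (by omega) 0 (by omega))
  set Sset : Set ℕ := Set.Icc (a 0) (b K) ∪ Set.Icc (b K + Q + 1) (b (K + 1)) with hSset
  set GapF : Finset ℕ := (Finset.range K).biUnion (fun i => Finset.Icc (b i + 1) (b i + Q))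
    with hGapF
  have hsub1 : U ⊆ Sset := by
    intro m hm
    simp only [hU, Set.mem_iUnion, Finset.mem_range, Set.mem_Icc] at hm
    obtain ⟨i, hi, h1, h2⟩ := hm
    simp only [hSset, Set.mem_union, Set.mem_Icc]
    by_cases hiK : i ≤ K
    · left
      exact ⟨le_trans (amono i (by omega)) h1, le_trans h2 (bmono K (by omega) i hiK)⟩
    · have : i = K + 1 := by omega
      subst this
      right
      have := hsep K (by omega)
      omega
  have hsub2 : Sset ⊆ U ∪ ↑GapF := by
    intro m hm
    simp only [hSset, Set.mem_union, Set.mem_Icc] at hm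
    rcases hm with ⟨h1, h2⟩ | ⟨h1, h2⟩
    · rcases cover K (by omega) m h1 h2 with ⟨i, hi1, hi2, hi3⟩ | ⟨i, hi1, hi2, hi3⟩
      · left
        simp only [hU, Set.mem_iUnion, Finset.mem_range, Set.mem_Icc]
        exact ⟨i, by omega, hi2, hi3⟩
      · right
        simp only [hGapF, Finset.coe_biUnion, Set.mem_iUnion, Finset.coe_Icc,
          Finset.mem_coe, Finset.mem_range, Set.mem_Icc]
        exact ⟨i, hi1, hi2, hi3⟩
    · left
      simp only [hU, Set.mem_iUnion, Finset.mem_range, Set.mem_Icc]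
      have := hsep K (by omega)
      exact ⟨K + 1, by omega, by omega, h2⟩
  have hGap1 : ∀ i ∈ GapF, 1 ≤ i := by
    intro i hi
    simp only [hGapF, Finset.mem_biUnion, Finset.mem_Icc, Finset.mem_range] at hi
    obtain ⟨j, _, h1, _⟩ := hi
    omega
  have hGapCard : (GapF.card : ℝ) ≤ (K : ℝ) * Q := by
    have h1 : GapF.card ≤ ∑ i ∈ Finset.range K, (Finset.Icc (b i + 1) (b i + Q)).card :=
      Finset.card_biUnion_le
    have h2 : ∀ i ∈ Finset.range K, (Finset.Icc (b i + 1) (b i + Q)).card = Q := by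
      intro i _; rw [Nat.card_Icc]; omega
    rw [Finset.sum_congr rfl h2, Finset.sum_const, smul_eq_mul, Finset.card_range] at h1
    calc (GapF.card : ℝ) ≤ ((K * Q : ℕ) : ℝ) := by exact_mod_cast h1
      _ = (K : ℝ) * Q := by push_cast; ring
  have hfill := pr_fill P X F x hmeas hF' U Sset GapF hsub1 hsub2 hGap1
  have hfill' : |pr P (allLe X U x) - pr P (allLe X Sset x)| ≤ (K : ℝ) * Q * Fb :=
    le_trans hfill (mul_le_mul_of_nonneg_right hGapCard hFbnn)
  have hb0K : b 0 ≤ b K := bmono K (by omega) 0 (by omega)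
  have hAIM := hbd n (a 0) (b K) (b (K + 1)) ha1 haK hbK1
    (by simpa using hbn)
    (by have h1 := hcard 0 (by omega); have h2 := hab 0 (by omega); omega)
    (by have h1 := hcard (K + 1) (by omega); have h2 := hab (K + 1) (by omega);
        have h3 := hsep K (by omega); omega)
  rw [← hQ, ← hx] at hAIM
  have HK := H K (by omega)
  -- product split
  have hprod : ∏ i ∈ Finset.range (K + 2), pr P (allLe X (Set.Icc (a i) (b i)) x) =
      (∏ i ∈ Finset.range (K + 1), pr P (allLe X (Set.Icc (a i) (b i)) x)) *
        pr P (allLe X (Set.Icc (a (K + 1)) (b (K + 1))) x) := Finset.prod_range_succ _ _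
  set p := pr P (allLe X (Set.Icc (a (K + 1)) (b (K + 1))) x) with hp
  set Pi := ∏ i ∈ Finset.range (K + 1), pr P (allLe X (Set.Icc (a i) (b i)) x) with hPi
  have hp0 : 0 ≤ p := pr_nonneg P _
  have hp1 : p ≤ 1 := pr_le_one P _
  have hsp' : Set.Icc (a (K + 1)) (b (K + 1)) = Set.Icc (b K + Q + 1) (b (K + 1)) := by
    rw [hsep K (by omega)]
  have hAIM' : |pr P (allLe X Sset x) - pr P (allLe X (Set.Icc (a 0) (b K)) x) * p| ≤ A := by
    rw [hp, hsp']; exact hAIM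
  have h3 : |pr P (allLe X (Set.Icc (a 0) (b K)) x) * p - Pi * p| ≤
      (K : ℝ) * A + (K : ℝ) * Q * Fb := by
    rw [← sub_mul, abs_mul, abs_of_nonneg hp0]
    calc |pr P (allLe X (Set.Icc (a 0) (b K)) x) - Pi| * p
        ≤ ((K : ℝ) * A + (K : ℝ) * Q * Fb) * p := mul_le_mul_of_nonneg_right HK hp0
      _ ≤ ((K : ℝ) * A + (K : ℝ) * Q * Fb) * 1 :=
          mul_le_mul_of_nonneg_left hp1 (le_trans (abs_nonneg _) HK)
      _ = (K : ℝ) * A + (K : ℝ) * Q * Fb := mul_one _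
  rw [hprod]
  have tri := abs_sub_le (pr P (allLe X U x)) (pr P (allLe X Sset x)) (Pi * p)
  have tri2 := abs_sub_le (pr P (allLe X Sset x))
    (pr P (allLe X (Set.Icc (a 0) (b K)) x) * p) (Pi * p)
  have hcast : ((K + 2 : ℕ) : ℝ) - 1 = (K : ℝ) + 1 := by push_cast; ring
  have hcast2 : ((K + 2 : ℕ) : ℝ) - 2 = (K : ℝ) := by push_cast; ring
  rw [hcast, hcast2]
  have hgoal : ((K : ℝ) + 1) * A + 2 * (K : ℝ) * Q * Fb =
      (K : ℝ) * Q * Fb + A + ((K : ℝ) * A + (K : ℝ) * Q * Fb) := by ring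
  rw [hgoal]
  linarith
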